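/- Let w be a g-word (a palindrome) whose g-word prefix w' (as produced by the recursive construction) is a power of a palindrome u of length g. Then w itself is a power of u. In particular, every g-word of length at least 2g is a power of a palindrome of length g, and hence has period g. -/
import Mathlib


/-- Corollary 3.4 / Theorem 3.5(a).  Let `w` be a g-word (a palindrome, of
length `n` a multiple of `g`) whose g-word prefix `w'` (of length `n'`, a
multiple of `g`, with `n/2 ≤ n' ≤ n`, as produced by the recursive
construction) is a power of a palindrome `u` of length `g`.  Then `w` itself is
a power of `u`; in particular every such g-word is a power of a length-`g`
palindrome and hence has period `g`. -/
theorem stmt_16 {α : Type*} (w u : ℕ → α) (n n' g : ℕ) (hg : 0 < g)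
    (hpal : ∀ i j, i + j + 1 = n → w i = w j)
    (hle : n ≤ 2 * n') (hlt : n' ≤ n)
    (hdvd : g ∣ n) (hdvd' : g ∣ n')
    (hupal : ∀ i j, i + j + 1 = g → u i = u j)
    (hpow : ∀ i < n', w i = u (i % g)) :
    ∀ i < n, w i = u (i % g) := by
  intro i hi
  by_cases h : i < n'
  · exact hpow i h
  · push_neg at h
    set j := n - 1 - i with hj
    have hij : i + j + 1 = n := by omega
    have hjlt : j < n' := by omega
    have ha : i % g < g := Nat.mod_lt i hg
    have hb : j % g < g := Nat.mod_lt j hg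
    have hmeq : (i % g + j % g + 1) % g = (i + j + 1) % g := by
      have h1 : (i % g + j % g + 1) ≡ (i + j + 1) [MOD g] :=
        ((Nat.mod_modEq i g).add (Nat.mod_modEq j g)).add_right 1
      simpa [Nat.ModEq] using h1
    have h0 : (i + j + 1) % g = 0 := by
      obtain ⟨m, hm⟩ := hdvd
      rw [hij, hm, Nat.mul_mod_right]
    obtain ⟨k, hk⟩ : g ∣ (i % g + j % g + 1) :=
      Nat.dvd_of_mod_eq_zero (hmeq.trans h0)
    have hkpos : k ≠ 0 := by rintro rfl; rw [Nat.mul_zero] at hk; omega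
    have hklt : k < 2 := by
      have h2 : g * k < g * 2 := by omega
      exact Nat.lt_of_mul_lt_mul_left h2
    have hk1 : k = 1 := by omega
    subst hk1
    have hsum : i % g + j % g + 1 = g := by omega
    calc w i = w j := hpal i j hij
      _ = u (j % g) := hpow j hjlt
      _ = u (i % g) := (hupal (i % g) (j % g) hsum).symm
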